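/- arXiv:0709.3325 — 2 statements merged into one kernel-verified Lean document; each statement's English description precedes it below -/
import Mathlib

section
/- Let A be a unital commutative Banach algebra and let I_A^{[2]} denote the image of the multiplication map I_A ⊗̂ I_A → I_A. Then I_A^{[2]} = Im(τ_A). -/
noncomputable section

open scoped BigOperators

/-- A bundled Banach space over `ℂ`. -/
structure BanachSp where
  carrier : Type
  [ng : NormedAddCommGroup carrier]
  [ns : NormedSpace ℂ carrier]
  [cs : CompleteSpace carrier]

attribute [instance] BanachSp.ng BanachSp.ns BanachSp.cs

instance : CoeSort BanachSp Type := ⟨BanachSp.carrier⟩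

/-- `IsProjTensor ι` asserts that `T`, together with the bounded bilinear map `ι`, is a
realization of the completed projective tensor product `E ⊗̂ F`: the map `ι` is a
contractive bilinear map with dense linear span of elementary tensors, and every bounded
bilinear map out of `E × F` into a Banach space factors (necessarily uniquely) through `T`
without increase of norm.  These properties determine `T` up to isometric isomorphism. -/
structure IsProjTensor {E F T : Type*} [SeminormedAddCommGroup E] [NormedSpace ℂ E]
    [SeminormedAddCommGroup F] [NormedSpace ℂ F] [NormedAddCommGroup T] [NormedSpace ℂ T]
    (ι : E →L[ℂ] F →L[ℂ] T) : Prop where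
  complete : CompleteSpace T
  norm_tmul_le : ∀ x y, ‖ι x y‖ ≤ ‖x‖ * ‖y‖
  dense_span : Dense (Submodule.span ℂ (Set.range fun p : E × F => ι p.1 p.2) : Set T)
  lift : ∀ (G : Type) [NormedAddCommGroup G] [NormedSpace ℂ G] [CompleteSpace G]
      (φ : E →L[ℂ] F →L[ℂ] G),
      ∃ ψ : T →L[ℂ] G, ‖ψ‖ ≤ ‖φ‖ ∧ ∀ x y, ψ (ι x y) = φ x y

/-- Two seminormed spaces are *isomorphic as seminormed spaces* if there are mutually
inverse bounded (equivalently, continuous) linear maps between them. -/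
def IsBddIso (E F : Type*) [SeminormedAddCommGroup E] [NormedSpace ℂ E]
    [SeminormedAddCommGroup F] [NormedSpace ℂ F] : Prop :=
  ∃ (S : E →L[ℂ] F) (T : F →L[ℂ] E), (∀ x, T (S x) = x) ∧ (∀ y, S (T y) = y)

/-- The subquotient `Z/B` of a seminormed space, as a seminormed space. -/
abbrev SubQuot {F : Type*} [SeminormedAddCommGroup F] [Module ℂ F]
    (Z B : Submodule ℂ F) :=
  ↥Z ⧸ (B.comap Z.subtype)

end

noncomputable section

/-- Two continuous linear maps out of a projective tensor product which agree on
elementary tensors are equal. -/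
theorem IsProjTensor.ext_clm {E F T G : Type*} [SeminormedAddCommGroup E] [NormedSpace ℂ E]
    [SeminormedAddCommGroup F] [NormedSpace ℂ F] [NormedAddCommGroup T] [NormedSpace ℂ T]
    [NormedAddCommGroup G] [NormedSpace ℂ G] {ι : E →L[ℂ] F →L[ℂ] T}
    (h : IsProjTensor ι) {f g : T →L[ℂ] G}
    (hfg : ∀ x y, f (ι x y) = g (ι x y)) : f = g := by
  have h0 : Set.EqOn f g (Set.range fun p : E × F => ι p.1 p.2) := by
    rintro _ ⟨⟨x, y⟩, rfl⟩; exact hfg x y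
  have h1 : Set.EqOn f g (Submodule.span ℂ (Set.range fun p : E × F => ι p.1 p.2) : Set T) :=
    fun x hx =>
      LinearMap.eqOn_span (f := (f : T →ₗ[ℂ] G)) (g := (g : T →ₗ[ℂ] G)) h0 hx
  have hfun : ⇑f = ⇑g := Continuous.ext_on h.dense_span f.continuous g.continuous h1
  ext x; exact congrFun hfun x

set_option maxHeartbeats 1000000 in
/-- Let `A` be a unital commutative Banach algebra, let `I_A` be the
kernel of the product map `π : A ⊗̂ A → A`, and let `τ_A : A ⊗̂ A ⊗̂ A → A ⊗̂ A` be
`τ_A(x ⊗ y ⊗ a) = x ⊗ ya − xy ⊗ a − ax ⊗ y + axy ⊗ 1` (with values in `I_A`).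
If `I_A^{[2]}` denotes the image of the multiplication map `I_A ⊗̂ I_A → I_A`, then
`I_A^{[2]} = Im(τ_A)`.  Here `T2`, `T3`, `TI` are realizations of the completed projective
tensor products `A ⊗̂ A`, `A ⊗̂ A ⊗̂ A` and `I_A ⊗̂ I_A`, and `mul2` is the canonical
multiplication of the Banach algebra `A ⊗̂ A`. -/
theorem harrison_paper_stmt_10
    (A : Type) [NormedCommRing A] [NormedAlgebra ℂ A] [CompleteSpace A]
    -- a realization of `A ⊗̂ A`, with its multiplication
    (T2 : BanachSp) (ι2 : A →L[ℂ] A →L[ℂ] (T2 : Type)) (h2 : IsProjTensor ι2)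
    (mul2 : (T2 : Type) →L[ℂ] (T2 : Type) →L[ℂ] (T2 : Type))
    (hmul2 : ∀ x y x' y', mul2 (ι2 x y) (ι2 x' y') = ι2 (x * x') (y * y'))
    -- the product map `π : A ⊗̂ A → A`
    (π : (T2 : Type) →L[ℂ] A) (hπ : ∀ x y, π (ι2 x y) = x * y)
    -- a realization of `A ⊗̂ A ⊗̂ A`
    (T3 : BanachSp) (ι3 : (T2 : Type) →L[ℂ] A →L[ℂ] (T3 : Type)) (h3 : IsProjTensor ι3)
    -- the map `τ_A`
    (τ : (T3 : Type) →L[ℂ] (T2 : Type))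
    (hτ : ∀ x y a, τ (ι3 (ι2 x y) a)
        = ι2 x (y * a) - ι2 (x * y) a - ι2 (a * x) y + ι2 (a * x * y) 1)
    -- a realization of `I_A ⊗̂ I_A` and the induced multiplication map `I_A ⊗̂ I_A → A ⊗̂ A`
    (TI : BanachSp)
    (ιI : ↥(LinearMap.ker (π : (T2 : Type) →ₗ[ℂ] A)) →L[ℂ] ↥(LinearMap.ker (π : (T2 : Type) →ₗ[ℂ] A)) →L[ℂ] (TI : Type))
    (hI : IsProjTensor ιI)
    (μ : (TI : Type) →L[ℂ] (T2 : Type))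
    (hμ : ∀ v w : ↥(LinearMap.ker (π : (T2 : Type) →ₗ[ℂ] A)), μ (ιI v w) = mul2 ↑v ↑w) :
    LinearMap.range (μ : (TI : Type) →ₗ[ℂ] (T2 : Type)) = LinearMap.range (τ : (T3 : Type) →ₗ[ℂ] (T2 : Type)) := by
  classical
  -- the projection σ : A ⊗̂ A → I_A,  σ u = u - (π u) ⊗ 1
  set σ : (T2 : Type) →L[ℂ] (T2 : Type) :=
    ContinuousLinearMap.id ℂ (T2 : Type) - (ι2.flip 1).comp π with hσdef
  have hσ : ∀ u, σ u = u - ι2 (π u) 1 := by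
    intro u; simp [hσdef]
  -- the map σ₁ : A → I_A, σ₁ a = 1 ⊗ a - a ⊗ 1
  set σ₁ : A →L[ℂ] (T2 : Type) := ι2 1 - ι2.flip 1 with hσ₁def
  have hσ₁ : ∀ a, σ₁ a = ι2 1 a - ι2 a 1 := by
    intro a; simp [hσ₁def]
  -- π is multiplicative
  have hπmul1 : ∀ x y w, π (mul2 (ι2 x y) w) = (x * y) * π w := by
    intro x y
    have := h2.ext_clm (f := π.comp (mul2 (ι2 x y)))
        (g := (ContinuousLinearMap.mul ℂ A (x * y)).comp π) ?_
    · intro w; exact ContinuousLinearMap.ext_iff.mp this w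
    · intro p q
      simp [hmul2, hπ]
      ring
  have hπmul : ∀ u w, π (mul2 u w) = π u * π w := by
    intro u w
    have := h2.ext_clm (f := π.comp (mul2.flip w))
        (g := ((ContinuousLinearMap.mul ℂ A).flip (π w)).comp π) ?_
    · exact ContinuousLinearMap.ext_iff.mp this u
    · intro x y
      simp [hπmul1, hπ]
      ring
  -- σ u is in the kernel
  have hσK : ∀ u, σ u ∈ LinearMap.ker (π : (T2 : Type) →ₗ[ℂ] A) := by
    intro u
    simp [LinearMap.mem_ker, hσ, hπ]
  have hσ₁K : ∀ a, σ₁ a ∈ LinearMap.ker (π : (T2 : Type) →ₗ[ℂ] A) := by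
    intro a
    simp [LinearMap.mem_ker, hσ₁, hπ]
  have hσfix : ∀ u ∈ LinearMap.ker (π : (T2 : Type) →ₗ[ℂ] A), σ u = u := by
    intro u hu
    rw [hσ]
    have : π u = 0 := hu
    simp [this]
  -- the fundamental formula for τ on elementary tensors of T3
  have htau : ∀ (u : (T2 : Type)) (a : A), τ (ι3 u a) = mul2 (σ u) (σ₁ a) := by
    intro u a
    have := h2.ext_clm (f := τ.comp (ι3.flip a))
        (g := (mul2.flip (σ₁ a)).comp σ) ?_
    · exact ContinuousLinearMap.ext_iff.mp this u
    · intro x y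
      simp only [ContinuousLinearMap.comp_apply, ContinuousLinearMap.flip_apply]
      rw [hτ, hσ, hπ, hσ₁]
      simp only [map_sub, ContinuousLinearMap.sub_apply, hmul2]
      simp only [mul_one, one_mul]
      rw [mul_comm x a, mul_comm (x*y) a]
      ring_nf
      abel
  -- associativity/commutativity identity needed below
  have hassoc : ∀ (x : A) (t s : (T2 : Type)),
      mul2 (mul2 (ι2 x 1) t) s = mul2 t (mul2 (ι2 x 1) s) := by
    intro x t s
    have := h2.ext_clm (f := mul2.comp (mul2 (ι2 x 1)))
        (g := ((ContinuousLinearMap.compL ℂ (T2 : Type) (T2 : Type) (T2 : Type)).flip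
          (mul2 (ι2 x 1))).comp mul2) ?_
    · exact ContinuousLinearMap.ext_iff.mp (ContinuousLinearMap.ext_iff.mp this t) s
    · intro p q
      apply h2.ext_clm
      intro r t'
      simp [hmul2]
      ring_nf
  -- the lift Ψ : T2 → (T2 →L T3) with Ψ (x ⊗ y) v = ι3 ((x ⊗ 1) * v) y
  set φ : A →L[ℂ] A →L[ℂ] ((T2 : Type) →L[ℂ] (T3 : Type)) :=
    ((ContinuousLinearMap.compL ℂ A ((T2 : Type) →L[ℂ] (T3 : Type))
        ((T2 : Type) →L[ℂ] (T3 : Type))).flip ι3.flip).comp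
      (((ContinuousLinearMap.compL ℂ (T2 : Type) (T2 : Type) (T3 : Type)).flip).comp
        (mul2.comp (ι2.flip 1))) with hφdef
  have hφ : ∀ x y v, φ x y v = ι3 (mul2 (ι2 x 1) v) y := by
    intro x y v; rfl
  obtain ⟨Ψ, -, hΨ⟩ := h2.lift ((T2 : Type) →L[ℂ] (T3 : Type)) φ
  -- the map f : T3 → TI with f (u ⊗ a) = ιI (σ u) (σ₁ a)
  set σK : (T2 : Type) →L[ℂ] ↥(LinearMap.ker (π : (T2 : Type) →ₗ[ℂ] A)) := σ.codRestrict (LinearMap.ker (π : (T2 : Type) →ₗ[ℂ] A)) hσK with hσKdef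
  set σ₁K : A →L[ℂ] ↥(LinearMap.ker (π : (T2 : Type) →ₗ[ℂ] A)) := σ₁.codRestrict (LinearMap.ker (π : (T2 : Type) →ₗ[ℂ] A)) hσ₁K with hσ₁Kdef
  set F2 : (T2 : Type) →L[ℂ] A →L[ℂ] (TI : Type) :=
    ((ContinuousLinearMap.compL ℂ A ↥(LinearMap.ker (π : (T2 : Type) →ₗ[ℂ] A)) (TI : Type)).flip σ₁K).comp (ιI.comp σK) with hF2def
  have hF2 : ∀ u a, F2 u a = ιI (σK u) (σ₁K a) := fun u a => rfl
  obtain ⟨f, -, hf⟩ := h3.lift (TI : Type) F2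
  -- μ ∘ f = τ
  have hμf : μ.comp f = τ := by
    apply h3.ext_clm
    intro u a
    simp only [ContinuousLinearMap.comp_apply]
    rw [hf, hF2, hμ, htau]
    rfl
  -- the map g : TI → T3 with g (v ⊗ w) = Ψ w v
  set B :(LinearMap.ker (π : (T2 : Type) →ₗ[ℂ] A)) →L[ℂ] ↥(LinearMap.ker (π : (T2 : Type) →ₗ[ℂ] A)) →L[ℂ] (T3 : Type) :=
    ((Ψ.comp (LinearMap.ker (π : (T2 : Type) →ₗ[ℂ] A)).subtypeL).flip).comp (LinearMap.ker (π : (T2 : Type) →ₗ[ℂ] A)).subtypeL with hBdef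
  have hB : ∀ v w : LinearMap.ker (π : (T2 : Type) →ₗ[ℂ] A), B v w = Ψ ↑w ↑v := fun v w => rfl
  obtain ⟨g, -, hg⟩ := hI.lift (T3 : Type) B
  -- τ ∘ g = μ
  have key : ∀ v w : LinearMap.ker (π : (T2 : Type) →ₗ[ℂ] A), τ (Ψ ↑w ↑v) = mul2 ↑v ↑w := by
    intro v w
    have hmain : (τ.comp (Ψ.flip ↑v)).comp σ = (mul2 ↑v).comp σ := by
      apply h2.ext_clm
      intro x y
      simp only [ContinuousLinearMap.comp_apply, ContinuousLinearMap.flip_apply]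
      rw [hσ, hπ]
      rw [map_sub, map_sub, ContinuousLinearMap.sub_apply]
      rw [hΨ, hΨ, hφ, hφ]
      rw [map_sub]
      rw [htau, htau]
      have hσ₁1 : σ₁ (1 : A) = 0 := by
        rw [hσ₁]; simp
      rw [hσ₁1, map_zero]
      have hker1 : mul2 (ι2 x 1) ↑v ∈ LinearMap.ker (π : (T2 : Type) →ₗ[ℂ] A) := by
        simp [LinearMap.mem_ker, hπmul, hπ, (v.2 : π ↑v = 0)]
      rw [hσfix _ hker1]
      rw [hassoc]
      have : mul2 (ι2 x 1) (σ₁ y) = ι2 x y - ι2 (x * y) 1 := by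
        rw [hσ₁, map_sub, hmul2, hmul2]
        simp
      rw [this]
      simp
    have h1 := ContinuousLinearMap.ext_iff.mp hmain (↑w : (T2 : Type))
    simp only [ContinuousLinearMap.comp_apply, ContinuousLinearMap.flip_apply] at h1
    rw [hσfix _ w.2] at h1
    exact h1
  have hτg : τ.comp g = μ := by
    apply hI.ext_clm
    intro v w
    simp only [ContinuousLinearMap.comp_apply]
    rw [hg, hB, key, hμ]
  -- conclude
  apply le_antisymm
  · rintro t ⟨s, rfl⟩
    refine ⟨g s, ?_⟩
    have := ContinuousLinearMap.ext_iff.mp hτg s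
    simpa using this
  · rintro t ⟨s, rfl⟩
    refine ⟨f s, ?_⟩
    have := ContinuousLinearMap.ext_iff.mp hμf s
    simpa using this

end
end

section
/- Let A = ℓ¹(ℤ₊) be the convolution algebra, and let q : A ⊗̂ A → ℓ¹(ℕ) be the bounded linear map determined by q(1⊗1) = 0 and q(z^k ⊗ z^l) = (l/(k+l)) z^{k+l} for k, l ∈ ℤ₊ with k+l ≥ 1. Then q is surjective, and ker(q) equals the space B_1(A,A) of Hochschild 1-boundaries, i.e. the image of d_1 : A ⊗̂ A ⊗̂ A → A ⊗̂ A, d_1(x⊗a_1⊗a_2) = xa_1⊗a_2 − x⊗a_1a_2 + a_2x⊗a_1. -/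
noncomputable section

namespace HarrisonAux

open scoped ENNReal

set_option linter.unusedSectionVars false


lemma l1_summable_norm (f : lp (fun _ : ℕ => ℂ) 1) : Summable fun k => ‖f k‖ := by
  have h := (lp.memℓp f).summable (p := (1 : ℝ≥0∞)) (by norm_num)
  simpa using h

lemma l1_norm_eq (f : lp (fun _ : ℕ => ℂ) 1) : ‖f‖ = ∑' k, ‖f k‖ := by
  have h := lp.norm_eq_tsum_rpow (p := (1 : ℝ≥0∞)) (E := fun _ : ℕ => ℂ) (by norm_num) f
  simpa using h

lemma l1_norm_single : ‖lp.single (E := fun _ : ℕ => ℂ) 1 0 (1:ℂ)‖ = 1 := by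
  have := lp.norm_single (p := (1:ℝ≥0∞)) (E := fun _ : ℕ => ℂ) (by norm_num)
    0 (1:ℂ)
  simpa using this

lemma ext1 {G : Type*} [NormedAddCommGroup G] [NormedSpace ℂ G] [CompleteSpace G]
    (v : ℕ → G) (C : ℝ) (hv : ∀ k, ‖v k‖ ≤ C) :
    ∃ L : lp (fun _ : ℕ => ℂ) 1 →L[ℂ] G, ‖L‖ ≤ C ∧ ∀ k, L (lp.single 1 k 1) = v k := by
  have hC0 : 0 ≤ C := le_trans (norm_nonneg (v 0)) (hv 0)
  have hsn : ∀ f : lp (fun _ : ℕ => ℂ) 1, Summable fun k => ‖(f k) • v k‖ := by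
    intro f
    refine Summable.of_nonneg_of_le (fun k => norm_nonneg _) (fun k => ?_)
      ((l1_summable_norm f).mul_right C)
    rw [norm_smul]
    exact mul_le_mul_of_nonneg_left (hv k) (norm_nonneg _)
  have hsum : ∀ f : lp (fun _ : ℕ => ℂ) 1, Summable fun k => (f k) • v k :=
    fun f => Summable.of_norm (hsn f)
  let L0 : lp (fun _ : ℕ => ℂ) 1 →ₗ[ℂ] G :=
    { toFun := fun f => ∑' k, (f k) • v k
      map_add' := by
        intro f g
        show (∑' k, ((f + g : lp (fun _ : ℕ => ℂ) 1) k) • v k) = _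
        calc (∑' k, ((f + g : lp (fun _ : ℕ => ℂ) 1) k) • v k)
            = ∑' k, ((f k) • v k + (g k) • v k) :=
              tsum_congr fun k => by simp [add_smul]
          _ = _ := Summable.tsum_add (hsum f) (hsum g)
      map_smul' := by
        intro c f
        show (∑' k, ((c • f : lp (fun _ : ℕ => ℂ) 1) k) • v k) = c • ∑' k, (f k) • v k
        calc (∑' k, ((c • f : lp (fun _ : ℕ => ℂ) 1) k) • v k)
            = ∑' k, c • ((f k) • v k) := tsum_congr fun k => by simp [smul_smul]
          _ = c • ∑' k, (f k) • v k := Summable.tsum_const_smul c (hsum f) }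
  have hbd : ∀ f, ‖L0 f‖ ≤ C * ‖f‖ := by
    intro f
    have h1 : ‖L0 f‖ ≤ ∑' k, ‖(f k) • v k‖ := norm_tsum_le_tsum_norm (hsn f)
    have h2 : ∑' k, ‖(f k) • v k‖ ≤ ∑' k, ‖f k‖ * C := by
      refine Summable.tsum_le_tsum (fun k => ?_) (hsn f) ((l1_summable_norm f).mul_right C)
      rw [norm_smul]
      exact mul_le_mul_of_nonneg_left (hv k) (norm_nonneg _)
    have h3 : ∑' k, ‖f k‖ * C = C * ‖f‖ := by
      rw [tsum_mul_right, l1_norm_eq f, mul_comm]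
    linarith
  refine ⟨L0.mkContinuous C hbd, LinearMap.mkContinuous_norm_le L0 hC0 hbd, fun k => ?_⟩
  show (∑' j, (lp.single (E := fun _ : ℕ => ℂ) 1 k (1:ℂ) j) • v j) = v k
  rw [tsum_eq_single k]
  · rw [lp.single_apply_self, one_smul]
  · intro j hj
    rw [lp.single_apply_ne _ _ _ hj, zero_smul]

lemma mem_closure_span_of_hasSum {X : Type*} [AddCommGroup X] [Module ℂ X]
    [TopologicalSpace X] [IsTopologicalAddGroup X]
    {g : ℕ → X} {x : X} (h : HasSum g x) {s : Set X}
    (hg : ∀ i, g i ∈ Submodule.span ℂ s) :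
    x ∈ closure (Submodule.span ℂ s : Set X) := by
  refine mem_closure_of_tendsto h (Filter.Eventually.of_forall fun t => ?_)
  exact Submodule.sum_mem _ fun i _ => hg i

lemma dense_span_single :
    Dense (Submodule.span ℂ
      (Set.range fun k : ℕ => lp.single (E := fun _ : ℕ => ℂ) 1 k (1:ℂ)) :
        Set (lp (fun _ : ℕ => ℂ) 1)) := by
  intro f
  have h := lp.hasSum_single (p := (1:ℝ≥0∞)) (E := fun _ : ℕ => ℂ) (by norm_num) f
  refine mem_closure_span_of_hasSum h (fun i => ?_)
  have : lp.single (E := fun _ : ℕ => ℂ) 1 i (f i) = (f i) • lp.single 1 i (1:ℂ) := by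
    rw [← lp.single_smul]
    norm_num
  rw [this]
  exact Submodule.smul_mem _ _ (Submodule.subset_span ⟨i, rfl⟩)

lemma dense_span_image2 {E F T : Type*}
    [NormedAddCommGroup E] [NormedSpace ℂ E] [NormedAddCommGroup F] [NormedSpace ℂ F]
    [NormedAddCommGroup T] [NormedSpace ℂ T]
    (ι : E →L[ℂ] F →L[ℂ] T)
    (hT : Dense (Submodule.span ℂ (Set.range fun p : E × F => ι p.1 p.2) : Set T))
    {SE : Set E} {SF : Set F}
    (hE : Dense (Submodule.span ℂ SE : Set E)) (hF : Dense (Submodule.span ℂ SF : Set F)) :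
    Dense (Submodule.span ℂ (Set.image2 (fun x y => ι x y) SE SF) : Set T) := by
  set N := (Submodule.span ℂ (Set.image2 (fun x y => ι x y) SE SF)).topologicalClosure with hNdef
  have hNc : IsClosed (N : Set T) := Submodule.isClosed_topologicalClosure _
  have step1 : ∀ x ∈ SE, ∀ y : F, ι x y ∈ N := by
    intro x hx y
    have hsub : (Submodule.span ℂ SF : Set F) ⊆ (ι x) ⁻¹' (N : Set T) := by
      intro y hy
      refine Submodule.span_induction (p := fun y _ => ι x y ∈ N) ?_ ?_ ?_ ?_ hy
      · intro w hw
        exact Submodule.le_topologicalClosure _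
          (Submodule.subset_span (Set.mem_image2_of_mem hx hw))
      · simp
      · intro a b _ _ ha hb
        rw [map_add]; exact N.add_mem ha hb
      · intro c a _ ha
        rw [map_smul]; exact N.smul_mem c ha
    have hcl : closure (Submodule.span ℂ SF : Set F) ⊆ (ι x) ⁻¹' (N : Set T) :=
      closure_minimal hsub (hNc.preimage (ι x).continuous)
    exact hcl (hF y)
  have step2 : ∀ (x : E) (y : F), ι x y ∈ N := by
    intro x y
    have hsub : (Submodule.span ℂ SE : Set E) ⊆ (fun x => ι x y) ⁻¹' (N : Set T) := by
      intro x hx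
      refine Submodule.span_induction (p := fun x _ => ι x y ∈ N) ?_ ?_ ?_ ?_ hx
      · intro w hw; exact step1 w hw y
      · simp
      · intro a b _ _ ha hb
        rw [map_add, ContinuousLinearMap.add_apply]; exact N.add_mem ha hb
      · intro c a _ ha
        rw [map_smul, ContinuousLinearMap.smul_apply]; exact N.smul_mem c ha
    have hcont : Continuous fun x : E => ι x y := (ι.flip y).continuous
    have hcl : closure (Submodule.span ℂ SE : Set E) ⊆ (fun x => ι x y) ⁻¹' (N : Set T) :=
      closure_minimal hsub (hNc.preimage hcont)
    exact hcl (hE x)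
  have hle : Submodule.span ℂ (Set.range fun p : E × F => ι p.1 p.2) ≤ N := by
    rw [Submodule.span_le]
    rintro _ ⟨p, rfl⟩
    exact step2 p.1 p.2
  have hdN : Dense (N : Set T) := hT.mono hle
  have huniv : (N : Set T) = Set.univ := by
    rw [← hNc.closure_eq]
    exact hdN.closure_eq
  rw [dense_iff_closure_eq, ← Submodule.topologicalClosure_coe, ← hNdef, huniv]




def stepFn (n m : ℕ) : ℕ := if 2*m ≤ n then 2*m else n - m

def muFn (n m : ℕ) : ℂ := if 2*m ≤ n then (1/2 : ℂ) else -1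

def mseq (n m i : ℕ) : ℕ := (stepFn n)^[i] m

def cseq (n m : ℕ) : ℕ → ℂ
  | 0 => 1
  | i+1 => muFn n (mseq n m i) * cseq n m i

lemma mseq_zero (n m : ℕ) : mseq n m 0 = m := rfl

lemma mseq_succ (n m i : ℕ) : mseq n m (i+1) = stepFn n (mseq n m i) :=
  Function.iterate_succ_apply' _ _ _

lemma stepFn_le {n m : ℕ} (hm : m ≤ n) : stepFn n m ≤ n := by
  rw [stepFn]; split <;> omega

lemma mseq_le {n m : ℕ} (hm : m ≤ n) (i : ℕ) : mseq n m i ≤ n := by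
  induction i with
  | zero => exact hm
  | succ i ih => rw [mseq_succ]; exact stepFn_le ih

lemma sqrt2_facts : (0:ℝ) < Real.sqrt 2 ∧ (1:ℝ) ≤ Real.sqrt 2 ∧
    Real.sqrt 2 * Real.sqrt 2 = 2 ∧ (Real.sqrt 2)⁻¹ < 1 ∧ (0:ℝ) ≤ (Real.sqrt 2)⁻¹ ∧
    Real.sqrt 2 ≤ 3/2 := by
  have hss : Real.sqrt 2 * Real.sqrt 2 = 2 := Real.mul_self_sqrt (by norm_num)
  have h1 : (1:ℝ) ≤ Real.sqrt 2 := by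
    nlinarith [Real.sqrt_nonneg 2]
  have h0 : (0:ℝ) < Real.sqrt 2 := by linarith
  have hup : Real.sqrt 2 ≤ 3/2 := by nlinarith
  refine ⟨h0, h1, hss, ?_, inv_nonneg.mpr h0.le, hup⟩
  rw [inv_lt_one_iff₀]
  right
  nlinarith

lemma cseq_bound (n m : ℕ) (i : ℕ) :
    ‖cseq n m i‖ ≤ Real.sqrt 2 * ((Real.sqrt 2)⁻¹)^i ∧
      (n < 2 * mseq n m i → ‖cseq n m i‖ ≤ ((Real.sqrt 2)⁻¹)^i) := by
  obtain ⟨h0, h1, hss, hw1, hw0, -⟩ := sqrt2_facts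
  set w := (Real.sqrt 2)⁻¹ with hw
  have hsw : Real.sqrt 2 * w = 1 := mul_inv_cancel₀ h0.ne'
  induction i with
  | zero =>
    constructor
    · show ‖(1:ℂ)‖ ≤ _
      rw [norm_one, pow_zero, mul_one]; exact h1
    · intro _
      show ‖(1:ℂ)‖ ≤ _
      rw [norm_one, pow_zero]
  | succ i ih =>
    have hwpow : (0:ℝ) ≤ w^i := pow_nonneg hw0 i
    have hcs : cseq n m (i+1) = muFn n (mseq n m i) * cseq n m i := rfl
    by_cases hc : 2 * (mseq n m i) ≤ n
    · have hmu : ‖muFn n (mseq n m i)‖ = 1/2 := by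
        rw [muFn, if_pos hc]; norm_num
      have hkey : ‖cseq n m (i+1)‖ ≤ w^(i+1) := by
        rw [hcs, norm_mul, hmu, pow_succ]
        have := ih.1
        have hcnn : (0:ℝ) ≤ ‖cseq n m i‖ := norm_nonneg _
        nlinarith
      refine ⟨?_, fun _ => hkey⟩
      calc ‖cseq n m (i+1)‖ ≤ w^(i+1) := hkey
        _ ≤ Real.sqrt 2 * w^(i+1) := by nlinarith [pow_nonneg hw0 (i+1)]
    · have hmu : ‖muFn n (mseq n m i)‖ = 1 := by
        rw [muFn, if_neg hc]; norm_num
      have hib : ‖cseq n m i‖ ≤ w^i := ih.2 (by omega)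
      have heq : Real.sqrt 2 * w^(i+1) = w^i := by
        rw [pow_succ]
        calc Real.sqrt 2 * (w^i * w) = (Real.sqrt 2 * w) * w^i := by ring
          _ = w^i := by rw [hsw, one_mul]
      have hkey : ‖cseq n m (i+1)‖ ≤ Real.sqrt 2 * w^(i+1) := by
        rw [hcs, norm_mul, hmu, one_mul, heq]; exact hib
      refine ⟨hkey, fun hcontra => ?_⟩
      exfalso
      rw [mseq_succ, stepFn, if_neg hc] at hcontra
      omega

section Witness

variable {A : Type} [NormedCommRing A] [NormedAlgebra ℂ A] [CompleteSpace A]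
  (z : ℕ → A) {T2 : BanachSp} (ι2 : A →L[ℂ] A →L[ℂ] T2.carrier)
  {T3 : BanachSp} (ι3 : T2.carrier →L[ℂ] A →L[ℂ] T3.carrier)

def gFn (n m : ℕ) : T3.carrier :=
  if 2*m ≤ n then (1/2 : ℂ) • ι3 (ι2 (z (n - 2*m)) (z m)) (z m)
  else ι3 (ι2 (z 0) (z (n - m))) (z m)

def telE (n m : ℕ) : T2.carrier :=
  ι2 (z (n - m)) (z m) - (((m : ℂ))/((n : ℂ))) • ι2 (z 0) (z n)

lemma d1_gFn (hA1 : z 0 = 1) (hAm : ∀ k l, z k * z l = z (k+l))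
    (d1 : T3.carrier →L[ℂ] T2.carrier)
    (hd1 : ∀ x a₁ a₂ : A, d1 (ι3 (ι2 x a₁) a₂)
      = ι2 (x * a₁) a₂ - ι2 x (a₁ * a₂) + ι2 (a₂ * x) a₁)
    {n m : ℕ} (hn : 1 ≤ n) (hm : m ≤ n) :
    d1 (gFn z ι2 ι3 n m)
      = telE z ι2 n m - muFn n m • telE z ι2 n (stepFn n m) := by
  have hnC : ((n:ℕ) : ℂ) ≠ 0 := Nat.cast_ne_zero.mpr (by omega)
  by_cases hc : 2*m ≤ n
  · rw [gFn, if_pos hc, muFn, if_pos hc, stepFn, if_pos hc]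
    rw [map_smul, hd1, hAm, hAm, hAm]
    rw [show n - 2*m + m = n - m from by omega, show m + m = 2*m from by omega,
      show m + (n - 2*m) = n - m from by omega]
    rw [telE, telE]
    match_scalars <;> push_cast <;> field_simp <;> ring
  · rw [gFn, if_neg hc, muFn, if_neg hc, stepFn, if_neg hc]
    rw [hd1, hAm, hAm, hAm]
    rw [show 0 + (n - m) = n - m from by omega, show n - m + m = n from by omega,
      show m + 0 = m from by omega]
    rw [telE, telE]
    rw [show n - (n - m) = m from by omega]
    have hcast : (((n - m : ℕ)) : ℂ) = (n : ℂ) - (m : ℂ) := by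
      push_cast [Nat.cast_sub hm]; ring
    rw [hcast]
    match_scalars
    · rfl
    · linear_combination mul_inv_cancel₀ hnC
    · ring

lemma norm_gFn_le (hz : ∀ k, ‖z k‖ = 1)
    (hι2 : ∀ x y, ‖ι2 x y‖ ≤ ‖x‖ * ‖y‖) (hι3 : ∀ t y, ‖ι3 t y‖ ≤ ‖t‖ * ‖y‖)
    (n m : ℕ) : ‖gFn z ι2 ι3 n m‖ ≤ 1 := by
  have key : ∀ a b c : ℕ, ‖ι3 (ι2 (z a) (z b)) (z c)‖ ≤ 1 := by
    intro a b c
    calc ‖ι3 (ι2 (z a) (z b)) (z c)‖ ≤ ‖ι2 (z a) (z b)‖ * ‖z c‖ := hι3 _ _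
      _ ≤ (‖z a‖ * ‖z b‖) * ‖z c‖ := by
          apply mul_le_mul_of_nonneg_right (hι2 _ _) (norm_nonneg _)
      _ = 1 := by rw [hz, hz, hz]; ring
  rw [gFn]
  split
  · rw [norm_smul]
    calc ‖(1/2 : ℂ)‖ * ‖ι3 (ι2 (z (n - 2*m)) (z m)) (z m)‖
        ≤ ‖(1/2 : ℂ)‖ * 1 := by
          apply mul_le_mul_of_nonneg_left (key _ _ _) (norm_nonneg _)
      _ ≤ 1 := by norm_num
  · exact key _ _ _

lemma norm_telE_le (hz : ∀ k, ‖z k‖ = 1)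
    (hι2 : ∀ x y, ‖ι2 x y‖ ≤ ‖x‖ * ‖y‖) {n m : ℕ} (hm : m ≤ n) :
    ‖telE z ι2 n m‖ ≤ 2 := by
  have key : ∀ a b : ℕ, ‖ι2 (z a) (z b)‖ ≤ 1 := by
    intro a b
    calc ‖ι2 (z a) (z b)‖ ≤ ‖z a‖ * ‖z b‖ := hι2 _ _
      _ = 1 := by rw [hz, hz]; ring
  have hcoef : ‖(((m:ℕ):ℂ))/(((n:ℕ):ℂ))‖ ≤ 1 := by
    rcases Nat.eq_zero_or_pos n with hn | hn
    · subst hn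
      have : m = 0 := by omega
      subst this
      norm_num
    · rw [norm_div]
      rw [Complex.norm_natCast, Complex.norm_natCast]
      rw [div_le_one (by exact_mod_cast hn)]
      exact_mod_cast hm
  rw [telE]
  calc ‖ι2 (z (n-m)) (z m) - (((m:ℕ):ℂ)/((n:ℕ):ℂ)) • ι2 (z 0) (z n)‖
      ≤ ‖ι2 (z (n-m)) (z m)‖ + ‖(((m:ℕ):ℂ)/((n:ℕ):ℂ)) • ι2 (z 0) (z n)‖ := norm_sub_le _ _
    _ ≤ 1 + 1 := by
        apply add_le_add (key _ _)
        rw [norm_smul]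
        calc ‖(((m:ℕ):ℂ))/(((n:ℕ):ℂ))‖ * ‖ι2 (z 0) (z n)‖ ≤ 1 * 1 := by
              apply mul_le_mul hcoef (key _ _) (norm_nonneg _) zero_le_one
          _ = 1 := by norm_num
    _ = 2 := by norm_num

lemma exists_witness (hA1 : z 0 = 1) (hAm : ∀ k l, z k * z l = z (k+l))
    (hz : ∀ k, ‖z k‖ = 1)
    (hι2 : ∀ x y, ‖ι2 x y‖ ≤ ‖x‖ * ‖y‖) (hι3 : ∀ t y, ‖ι3 t y‖ ≤ ‖t‖ * ‖y‖)
    (d1 : T3.carrier →L[ℂ] T2.carrier)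
    (hd1 : ∀ x a₁ a₂ : A, d1 (ι3 (ι2 x a₁) a₂)
      = ι2 (x * a₁) a₂ - ι2 x (a₁ * a₂) + ι2 (a₂ * x) a₁)
    {n m : ℕ} (hn : 1 ≤ n) (hm : m ≤ n) :
    ∃ h : T3.carrier, ‖h‖ ≤ 6 ∧ d1 h = telE z ι2 n m := by
  obtain ⟨h0, h1, hss, hw1, hw0, hup⟩ := sqrt2_facts
  set w := (Real.sqrt 2)⁻¹ with hwdef
  set term : ℕ → T3.carrier := fun i => cseq n m i • gFn z ι2 ι3 n (mseq n m i) with hterm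
  have htb : ∀ i, ‖term i‖ ≤ Real.sqrt 2 * w^i := by
    intro i
    rw [hterm]
    calc ‖cseq n m i • gFn z ι2 ι3 n (mseq n m i)‖
        = ‖cseq n m i‖ * ‖gFn z ι2 ι3 n (mseq n m i)‖ := norm_smul _ _
      _ ≤ (Real.sqrt 2 * w^i) * 1 := by
          apply mul_le_mul ((cseq_bound n m i).1) (norm_gFn_le z ι2 ι3 hz hι2 hι3 _ _)
            (norm_nonneg _) (by nlinarith [pow_nonneg hw0 i])
      _ = Real.sqrt 2 * w^i := by ring
  have hgeo : Summable (fun i : ℕ => Real.sqrt 2 * w^i) :=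
    (summable_geometric_of_lt_one hw0 hw1).mul_left _
  have hsumn : Summable fun i => ‖term i‖ :=
    Summable.of_nonneg_of_le (fun i => norm_nonneg _) htb hgeo
  have hsum : Summable term := Summable.of_norm hsumn
  set vseq : ℕ → T2.carrier := fun i => cseq n m i • telE z ι2 n (mseq n m i) with hvseq
  have hvb : ∀ i, ‖vseq i‖ ≤ (Real.sqrt 2 * w^i) * 2 := by
    intro i
    rw [hvseq]
    calc ‖cseq n m i • telE z ι2 n (mseq n m i)‖
        = ‖cseq n m i‖ * ‖telE z ι2 n (mseq n m i)‖ := norm_smul _ _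
      _ ≤ (Real.sqrt 2 * w^i) * 2 := by
          apply mul_le_mul ((cseq_bound n m i).1)
            (norm_telE_le z ι2 hz hι2 (mseq_le hm i)) (norm_nonneg _)
            (by nlinarith [pow_nonneg hw0 i])
  have hvs : Summable vseq := by
    apply Summable.of_norm
    exact Summable.of_nonneg_of_le (fun i => norm_nonneg _) hvb (hgeo.mul_right 2)
  have hvs1 : Summable (fun i => vseq (i+1)) := by
    exact (summable_nat_add_iff 1).2 hvs
  refine ⟨∑' i, term i, ?_, ?_⟩
  · calc ‖∑' i, term i‖ ≤ ∑' i, ‖term i‖ := norm_tsum_le_tsum_norm hsumn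
      _ ≤ ∑' i, Real.sqrt 2 * w^i := Summable.tsum_le_tsum htb hsumn hgeo
      _ = Real.sqrt 2 * (1 - w)⁻¹ := by
          rw [tsum_mul_left, tsum_geometric_of_lt_one hw0 hw1]
      _ ≤ 6 := by
          have hwle : w ≤ 3/4 := by
            rw [hwdef]
            rw [inv_le_comm₀ h0 (by norm_num)]
            nlinarith
          have h4 : (1 - w)⁻¹ ≤ 4 := by
            rw [inv_le_comm₀ (by linarith) (by norm_num)]
            linarith
          nlinarith
  · have hfact : ∀ i, d1 (term i) = vseq i - vseq (i+1) := by
      intro i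
      rw [hterm]
      simp only []
      rw [map_smul, d1_gFn z ι2 ι3 hA1 hAm d1 hd1 hn (mseq_le hm i)]
      rw [smul_sub, smul_smul]
      rw [hvseq]
      simp only []
      congr 1
      rw [mseq_succ]
      show _ = cseq n m (i+1) • _
      rw [show cseq n m (i+1) = muFn n (mseq n m i) * cseq n m i from rfl]
      rw [mul_comm]
    calc d1 (∑' i, term i) = ∑' i, d1 (term i) := ContinuousLinearMap.map_tsum d1 hsum
      _ = ∑' i, (vseq i - vseq (i+1)) := tsum_congr hfact
      _ = (∑' i, vseq i) - ∑' i, vseq (i+1) := Summable.tsum_sub hvs hvs1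
      _ = vseq 0 := by
          rw [Summable.tsum_eq_zero_add hvs]
          abel
      _ = telE z ι2 n m := by
          rw [hvseq]
          simp only []
          rw [show cseq n m 0 = 1 from rfl, mseq_zero, one_smul]

end Witness


end HarrisonAux

end

noncomputable section

open scoped ENNReal

/-- `z` exhibits the unital commutative Banach algebra `A` as the convolution algebra
`ℓ¹(ℤ₊)`: the `z k` are the standard basis vectors `z^k`, they satisfy `z^k z^l = z^{k+l}`
and `z^0 = 1`, and the induced identification with the sequence space `ℓ¹` is an isometric
linear bijection. -/
structure IsL1ZPlus (A : Type) [NormedCommRing A] [NormedAlgebra ℂ A] [CompleteSpace A]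
    (z : ℕ → A) : Prop where
  one : z 0 = 1
  mul : ∀ k l, z k * z l = z (k + l)
  iso : ∃ φ : lp (fun _ : ℕ => ℂ) 1 ≃ₗᵢ[ℂ] A, ∀ k, φ (lp.single 1 k 1) = z k

set_option maxHeartbeats 2000000 in
/-- Let `A = ℓ¹(ℤ₊)` be the convolution algebra and let
`q : A ⊗̂ A → ℓ¹(ℕ)` be the bounded linear map determined by `q(1⊗1) = 0` and
`q(z^k ⊗ z^l) = (l/(k+l)) z^{k+l}` for `k + l ≥ 1`.  Then `q` is surjective and
`ker q = B_1(A,A)`, the image of the Hochschild boundary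
`d_1(x ⊗ a₁ ⊗ a₂) = xa₁ ⊗ a₂ − x ⊗ a₁a₂ + a₂x ⊗ a₁`.
(The Banach space `ℓ¹(ℕ)`, `ℕ = {1,2,…}`, is modelled as `lp` over `ℕ`, the basis vector
`z^m`, `m ≥ 1`, corresponding to `lp.single 1 (m-1) 1`.) -/
theorem harrison_paper_stmt_12
    (A : Type) [NormedCommRing A] [NormedAlgebra ℂ A] [CompleteSpace A]
    (z : ℕ → A) (hA : IsL1ZPlus A z)
    (T2 : BanachSp) (ι2 : A →L[ℂ] A →L[ℂ] (T2 : Type)) (h2 : IsProjTensor ι2)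
    (T3 : BanachSp) (ι3 : (T2 : Type) →L[ℂ] A →L[ℂ] (T3 : Type)) (h3 : IsProjTensor ι3)
    (d1 : (T3 : Type) →L[ℂ] (T2 : Type))
    (hd1 : ∀ x a₁ a₂ : A, d1 (ι3 (ι2 x a₁) a₂)
        = ι2 (x * a₁) a₂ - ι2 x (a₁ * a₂) + ι2 (a₂ * x) a₁)
    (q : (T2 : Type) →L[ℂ] lp (fun _ : ℕ => ℂ) 1)
    (hq0 : q (ι2 (z 0) (z 0)) = 0)
    (hq : ∀ k l : ℕ, 1 ≤ k + l →
      q (ι2 (z k) (z l)) = (((l : ℂ) / ((k : ℂ) + (l : ℂ)))) • lp.single 1 (k + l - 1) 1) :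
    Function.Surjective q ∧ LinearMap.ker (q : (T2 : Type) →ₗ[ℂ] lp (fun _ : ℕ => ℂ) 1) = LinearMap.range (d1 : (T3 : Type) →ₗ[ℂ] (T2 : Type)) := by
  classical
  obtain ⟨φ, hφ⟩ := hA.iso
  -- basic norm facts
  have hz : ∀ k, ‖z k‖ = 1 := by
    intro k
    rw [← hφ k, φ.norm_map]
    have h := lp.norm_single (p := (1:ℝ≥0∞)) (E := fun _ : ℕ => ℂ) (by norm_num)
      k (1:ℂ)
    simpa using h
  -- density of the span of the basis in A
  have hdzA : Dense (Submodule.span ℂ (Set.range z) : Set A) := by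
    intro x
    have h := lp.hasSum_single (p := (1:ℝ≥0∞)) (E := fun _ : ℕ => ℂ) (by norm_num) (φ.symm x)
    have hLx : HasSum (fun i => φ (lp.single 1 i ((φ.symm x) i))) x := by
      have h' := (φ.toLinearIsometry.toContinuousLinearMap).hasSum h
      simpa [LinearIsometry.coe_toContinuousLinearMap,
        LinearIsometryEquiv.coe_toLinearIsometry] using h'
    refine HarrisonAux.mem_closure_span_of_hasSum hLx (fun i => ?_)
    have hsingle : lp.single (E := fun _ : ℕ => ℂ) 1 i ((φ.symm x) i)
        = ((φ.symm x) i) • lp.single 1 i (1:ℂ) := by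
      rw [← lp.single_smul]; norm_num
    rw [hsingle, map_smul, hφ]
    exact Submodule.smul_mem _ _ (Submodule.subset_span ⟨i, rfl⟩)
  have hd2 : Dense (Submodule.span ℂ
      (Set.image2 (fun x y => ι2 x y) (Set.range z) (Set.range z)) : Set (T2 : Type)) :=
    HarrisonAux.dense_span_image2 ι2 h2.dense_span hdzA hdzA
  have hd3 : Dense (Submodule.span ℂ
      (Set.image2 (fun t y => ι3 t y)
        (Set.image2 (fun x y => ι2 x y) (Set.range z) (Set.range z))
        (Set.range z)) : Set (T3 : Type)) :=
    HarrisonAux.dense_span_image2 ι3 h3.dense_span hd2 hdzA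
  -- the bounded right inverse s of q
  obtain ⟨s, hsn, hs⟩ := HarrisonAux.ext1 (fun m => ι2 (z 0) (z (m+1))) 1 (fun m => by
    calc ‖ι2 (z 0) (z (m+1))‖ ≤ ‖z 0‖ * ‖z (m+1)‖ := h2.norm_tmul_le _ _
      _ = 1 := by rw [hz, hz]; ring)
  have hqs : q.comp s = ContinuousLinearMap.id ℂ _ := by
    apply ContinuousLinearMap.ext_on HarrisonAux.dense_span_single
    rintro _ ⟨m, rfl⟩
    simp only [ContinuousLinearMap.comp_apply, ContinuousLinearMap.id_apply]
    rw [hs m, hq 0 (m+1) (by omega)]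
    have hne : ((0:ℕ):ℂ) + (((m+1):ℕ):ℂ) ≠ 0 := by
      push_cast
      intro hcontra
      have : ((m:ℂ) + 1) ≠ 0 := by
        have := Nat.cast_ne_zero (R := ℂ).mpr (Nat.succ_ne_zero m)
        push_cast at this
        exact this
      simp only [zero_add] at hcontra
      exact this hcontra
    rw [show (((m+1):ℕ):ℂ) / (((0:ℕ):ℂ) + (((m+1):ℕ):ℂ)) = 1 from by
      rw [div_eq_one_iff_eq hne]; push_cast; ring]
    rw [one_smul, show 0 + (m+1) - 1 = m from by omega]
  have hsurj : Function.Surjective q := by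
    intro y
    refine ⟨s y, ?_⟩
    have h := DFunLike.congr_fun hqs y
    simpa using h
  -- q ∘ d1 = 0
  have hqd : q.comp d1 = 0 := by
    apply ContinuousLinearMap.ext_on hd3
    rintro _ ⟨t, ht, y, hy, rfl⟩
    obtain ⟨x, hx, y', hy', rfl⟩ := ht
    obtain ⟨j, rfl⟩ := hx
    obtain ⟨k, rfl⟩ := hy'
    obtain ⟨l, rfl⟩ := hy
    simp only [ContinuousLinearMap.comp_apply, ContinuousLinearMap.zero_apply]
    rw [hd1, hA.mul, hA.mul, hA.mul, map_add, map_sub]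
    by_cases hn : j + k + l = 0
    · have hj : j = 0 := by omega
      have hk : k = 0 := by omega
      have hl : l = 0 := by omega
      subst hj; subst hk; subst hl
      simp only [Nat.add_zero, Nat.zero_add] at *
      rw [hq0]
      abel
    · rw [hq (j+k) l (by omega), hq j (k+l) (by omega), hq (l+j) k (by omega)]
      rw [show (j+k)+l-1 = j+k+l-1 from by omega, show j+(k+l)-1 = j+k+l-1 from by omega,
        show (l+j)+k-1 = j+k+l-1 from by omega]
      have hcast1 : ((j+k : ℕ):ℂ) = (j:ℂ) + (k:ℂ) := by push_cast; ring
      have hcast2 : ((k+l : ℕ):ℂ) = (k:ℂ) + (l:ℂ) := by push_cast; ring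
      have hcast3 : ((l+j : ℕ):ℂ) = (l:ℂ) + (j:ℂ) := by push_cast; ring
      rw [hcast1, hcast2, hcast3]
      have hNe : ((j:ℂ) + (k:ℂ) + (l:ℂ)) ≠ 0 := by
        have hne := Nat.cast_ne_zero (R := ℂ).mpr hn
        push_cast at hne
        exact hne
      have e1 : ((j:ℂ) + (k:ℂ)) + (l:ℂ) ≠ 0 := by
        intro h; exact hNe (by linear_combination h)
      have e2 : (j:ℂ) + ((k:ℂ) + (l:ℂ)) ≠ 0 := by
        intro h; exact hNe (by linear_combination h)
      have e3 : ((l:ℂ) + (j:ℂ)) + (k:ℂ) ≠ 0 := by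
        intro h; exact hNe (by linear_combination h)
      rw [← sub_smul, ← add_smul]
      rw [show (l:ℂ) / (((j:ℂ)+(k:ℂ)) + (l:ℂ)) - ((k:ℂ)+(l:ℂ)) / ((j:ℂ) + ((k:ℂ)+(l:ℂ)))
          + (k:ℂ) / (((l:ℂ)+(j:ℂ)) + (k:ℂ)) = 0 from by field_simp; ring]
      rw [zero_smul]
  -- preimages of the canonical elements under d1
  have hfun_ex : ∀ k l : ℕ, ∃ h : (T3 : Type), ‖h‖ ≤ 6 ∧
      d1 h = (if k + l = 0 then ι2 (z 0) (z 0)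
        else ι2 (z k) (z l) - (((l:ℕ):ℂ)/(((k+l):ℕ):ℂ)) • ι2 (z 0) (z (k+l))) := by
    intro k l
    by_cases h0 : k + l = 0
    · refine ⟨ι3 (ι2 (z 0) (z 0)) (z 0), ?_, ?_⟩
      · calc ‖ι3 (ι2 (z 0) (z 0)) (z 0)‖ ≤ ‖ι2 (z 0) (z 0)‖ * ‖z 0‖ := h3.norm_tmul_le _ _
          _ ≤ (‖z 0‖ * ‖z 0‖) * ‖z 0‖ :=
              mul_le_mul_of_nonneg_right (h2.norm_tmul_le _ _) (norm_nonneg _)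
          _ = 1 := by simp [hz]
          _ ≤ 6 := by norm_num
      · rw [if_pos h0, hd1, hA.mul]
        simp only [Nat.add_zero, Nat.zero_add]
        abel
    · obtain ⟨h, hn, hd⟩ := HarrisonAux.exists_witness z ι2 ι3 hA.one hA.mul hz
        h2.norm_tmul_le h3.norm_tmul_le d1 hd1 (n := k + l) (m := l) (by omega) (by omega)
      refine ⟨h, hn, ?_⟩
      rw [hd, if_neg h0, HarrisonAux.telE, show k + l - l = k from by omega]
  choose hfun hfn hfd using hfun_ex
  choose inner hinner_n hinner_v using fun k => HarrisonAux.ext1 (fun l => hfun k l) 6 (hfn k)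
  obtain ⟨outer, houter_n, houter_v⟩ := HarrisonAux.ext1 inner 6 hinner_n
  set e : A →L[ℂ] lp (fun _ : ℕ => ℂ) 1 := φ.symm.toLinearIsometry.toContinuousLinearMap
    with he_def
  have he : ∀ k, e (z k) = lp.single 1 k 1 := by
    intro k
    show φ.symm (z k) = _
    rw [← hφ k, φ.symm_apply_apply]
  set γ : A →L[ℂ] A →L[ℂ] (T3 : Type) := (((outer.comp e).flip).comp e).flip with hγ_def
  have hγ : ∀ x y : A, γ x y = outer (e x) (e y) := by
    intro x y
    simp [hγ_def, ContinuousLinearMap.flip_apply, ContinuousLinearMap.comp_apply]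
  obtain ⟨σ, hσn, hσv⟩ := h2.lift (T3 : Type) γ
  have hσz : ∀ k l, σ (ι2 (z k) (z l)) = hfun k l := by
    intro k l
    rw [hσv, hγ, he, he, houter_v, hinner_v]
  -- the homotopy identity
  have hid : d1.comp σ + s.comp q = ContinuousLinearMap.id ℂ (T2 : Type) := by
    apply ContinuousLinearMap.ext_on hd2
    rintro _ ⟨x, hx, y, hy, rfl⟩
    obtain ⟨k, rfl⟩ := hx
    obtain ⟨l, rfl⟩ := hy
    simp only [ContinuousLinearMap.add_apply, ContinuousLinearMap.comp_apply,
      ContinuousLinearMap.id_apply]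
    rw [hσz, hfd]
    by_cases h0 : k + l = 0
    · have hk : k = 0 := by omega
      have hl : l = 0 := by omega
      subst hk; subst hl
      rw [if_pos h0, hq0, map_zero, add_zero]
    · rw [if_neg h0, hq k l (by omega), map_smul, hs, show k + l - 1 + 1 = k + l from by omega]
      have hcast : (((k+l):ℕ):ℂ) = (k:ℂ) + (l:ℂ) := by push_cast; ring
      rw [hcast]
      abel
  refine ⟨hsurj, ?_⟩
  apply le_antisymm
  · intro w hw
    have hw0 : q w = 0 := hw
    have h := DFunLike.congr_fun hid w
    simp only [ContinuousLinearMap.add_apply, ContinuousLinearMap.comp_apply,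
      ContinuousLinearMap.id_apply] at h
    rw [hw0, map_zero, add_zero] at h
    exact ⟨σ w, h⟩
  · rintro _ ⟨t, rfl⟩
    show q (d1 t) = 0
    have h := DFunLike.congr_fun hqd t
    simpa using h


end
end
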